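/- Let N be a positive integer, 0 < α < 1/8, and C ⊆ ℤ/Nℤ with the property that there do NOT exist four elements of C with pairwise circular distance at least αN. Then C is contained in the union of at most three circular intervals, each of length at most αN. -/
import Mathlib


/-- The circular distance between positions `a` and `b` of `ℤ/Nℤ`. -/
def circDist (N : ℕ) (a b : ZMod N) : ℕ := min (b - a).val (a - b).val

/-- The circular interval of `ℤ/Nℤ` with left endpoint `s` and right endpoint
`s + L` (so its "length", the distance between its endpoints, is `L`). -/
def circInterval (N : ℕ) (s : ZMod N) (L : ℕ) : Set (ZMod N) :=
  {x | ∃ k ≤ L, x = s + (k : ZMod N)}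

/-- `C` is "spread out" at scale `δ`: there are four elements of `C` whose pairwise
circular distances are all at least `δ`. -/
def SpreadOut (N : ℕ) (C : Finset (ZMod N)) (δ : ℝ) : Prop :=
  ∃ a ∈ C, ∃ b ∈ C, ∃ c ∈ C, ∃ d ∈ C,
    δ ≤ circDist N a b ∧ δ ≤ circDist N a c ∧ δ ≤ circDist N a d ∧
    δ ≤ circDist N b c ∧ δ ≤ circDist N b d ∧ δ ≤ circDist N c d

lemma castValRound {N : ℕ} [NeZero N] (a : ZMod N) : ((a.val : ℕ) : ZMod N) = a :=
  ZMod.natCast_rightInverse a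

lemma sub_val_eq' {N : ℕ} [NeZero N] {u v : ℕ} (hu : u < N) (hv : v < N) :
    ((v : ZMod N) - (u : ZMod N)).val = if u ≤ v then v - u else N - (u - v) := by
  split_ifs with h
  · have e : (v : ZMod N) - (u : ZMod N) = ((v - u : ℕ) : ZMod N) := by
      rw [Nat.cast_sub (R := ZMod N) h]
    rw [e, ZMod.val_cast_of_lt (by omega)]
  · push_neg at h
    have h1 : (v : ZMod N) - (u : ZMod N) = -(((u - v : ℕ)) : ZMod N) := by
      rw [Nat.cast_sub (R := ZMod N) h.le]; ring
    rw [h1, ZMod.neg_val, ZMod.val_cast_of_lt (by omega)]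
    have hne : ((u - v : ℕ) : ZMod N) ≠ 0 := by
      intro hc
      have := ZMod.val_cast_of_lt (n := N) (a := u - v) (by omega)
      rw [hc, ZMod.val_zero] at this
      omega
    simp [hne]

lemma mem_circInterval_of {N : ℕ} [NeZero N] (x1 y : ZMod N) (u L : ℕ)
    (h1 : u ≤ (y - x1).val) (h2 : (y - x1).val ≤ u + L) :
    y ∈ circInterval N (x1 + (u : ZMod N)) L := by
  refine ⟨(y - x1).val - u, by omega, ?_⟩
  have h3 : u + ((y - x1).val - u) = (y - x1).val := by omega
  have h4 : (((y - x1).val : ℕ) : ZMod N) = y - x1 := castValRound _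
  calc y = x1 + (y - x1) := by ring
    _ = x1 + (((y - x1).val : ℕ) : ZMod N) := by rw [h4]
    _ = x1 + (u : ZMod N) + (((y - x1).val - u : ℕ) : ZMod N) := by
        rw [show x1 + (((y - x1).val : ℕ) : ZMod N)
              = x1 + ((u + ((y - x1).val - u) : ℕ) : ZMod N) by rw [h3]]
        push_cast
        ring

lemma circDist_lower {N : ℕ} [NeZero N] (x1 a b : ZMod N)
    (h : (a - x1).val < (b - x1).val) (T : ℝ)
    (h1 : T ≤ ((b - x1).val : ℝ) - ((a - x1).val : ℝ))
    (h2 : T ≤ (N : ℝ) - ((b - x1).val : ℝ) + ((a - x1).val : ℝ)) :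
    T ≤ circDist N a b := by
  have hb : b - a = (((b - x1).val : ℕ) : ZMod N) - (((a - x1).val : ℕ) : ZMod N) := by
    rw [castValRound, castValRound]; ring
  have ha : a - b = (((a - x1).val : ℕ) : ZMod N) - (((b - x1).val : ℕ) : ZMod N) := by
    rw [castValRound, castValRound]; ring
  have hav : (a - x1).val < N := ZMod.val_lt _
  have hbv : (b - x1).val < N := ZMod.val_lt _
  have e1 : (b - a).val = (b - x1).val - (a - x1).val := by
    rw [hb, sub_val_eq' hav hbv, if_pos h.le]
  have e2 : (a - b).val = N - ((b - x1).val - (a - x1).val) := by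
    rw [ha, sub_val_eq' hbv hav, if_neg (by omega)]
  unfold circDist
  rw [e1, e2]
  have c1 : (((b - x1).val - (a - x1).val : ℕ) : ℝ)
      = ((b - x1).val : ℝ) - ((a - x1).val : ℝ) := by
    push_cast [h.le]; ring
  have c2 : ((N - ((b - x1).val - (a - x1).val) : ℕ) : ℝ)
      = (N : ℝ) - (((b - x1).val : ℝ) - ((a - x1).val : ℝ)) := by
    push_cast [h.le, show (b - x1).val - (a - x1).val ≤ N by omega]; ring
  rw [Nat.cast_min, c1, c2]
  exact le_min h1 (by linarith)

/-- If there do not exist four elements of `C ⊆ ℤ/Nℤ` with pairwise circular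
distances all at least `αN` (where `0 < α < 1/8`), then `C` is contained in the
union of at most three circular intervals, each of length at most `αN`. -/
theorem stmt_8 (N : ℕ) (hN : 0 < N) (α : ℝ) (hα0 : 0 < α) (hα : α < 1 / 8)
    (C : Finset (ZMod N)) (hnot : ¬ SpreadOut N C (α * N)) :
    ∃ (s₁ s₂ s₃ : ZMod N) (L₁ L₂ L₃ : ℕ),
      (L₁ : ℝ) ≤ α * N ∧ (L₂ : ℝ) ≤ α * N ∧ (L₃ : ℝ) ≤ α * N ∧
      ↑C ⊆ circInterval N s₁ L₁ ∪ circInterval N s₂ L₂ ∪ circInterval N s₃ L₃ := by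
  classical
  haveI : NeZero N := ⟨hN.ne'⟩
  have hNR : (0 : ℝ) < N := by exact_mod_cast hN
  set T : ℝ := α * N with hTdef
  have hT0 : 0 < T := by positivity
  have hT8 : 8 * T < N := by rw [hTdef]; nlinarith
  obtain ⟨L, hLdef⟩ : ∃ L : ℕ, L = ⌊T⌋₊ := ⟨_, rfl⟩
  have hL : (L : ℝ) ≤ T := by rw [hLdef]; exact Nat.floor_le hT0.le
  have natb : ∀ (n u : ℕ), u ≤ n → (n : ℝ) ≤ u + T → n ≤ u + L := by
    intro n u h hr
    have hc : ((n - u : ℕ) : ℝ) ≤ T := by push_cast [h]; linarith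
    have h2 := Nat.le_floor hc
    rw [← hLdef] at h2
    omega
  rcases Finset.eq_empty_or_nonempty C with hCe | hne
  · exact ⟨0, 0, 0, 0, 0, 0, by simpa using hT0.le, by simpa using hT0.le,
      by simpa using hT0.le, by simp [hCe]⟩
  by_cases hcard : C.card = 1
  · obtain ⟨x, hx⟩ := Finset.card_eq_one.mp hcard
    refine ⟨x, x, x, 0, 0, 0, by simpa using hT0.le, by simpa using hT0.le,
      by simpa using hT0.le, ?_⟩
    intro y hy
    rw [hx] at hy
    simp only [Finset.coe_singleton, Set.mem_singleton_iff] at hy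
    exact Or.inl (Or.inl ⟨0, le_refl 0, by simp [hy]⟩)
  have hcard2 : 1 < C.card := by
    have := Finset.Nonempty.card_pos hne; omega
  -- choose x1 maximizing the gap before it
  obtain ⟨x1, hx1C, hx1max⟩ :=
    C.exists_max_image (fun x => sInf {m | ∃ y ∈ C, y ≠ x ∧ (x - y).val = m}) hne
  have hmemInf : ∀ x ∈ C, ∃ y ∈ C, y ≠ x ∧
      (x - y).val = sInf {m | ∃ y ∈ C, y ≠ x ∧ (x - y).val = m} := by
    intro x hx
    obtain ⟨z, hzC, hzx⟩ := Finset.exists_mem_ne hcard2 x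
    have hne' : Set.Nonempty {m | ∃ y ∈ C, y ≠ x ∧ (x - y).val = m} :=
      ⟨(x - z).val, z, hzC, hzx, rfl⟩
    exact Nat.sInf_mem hne'
  obtain ⟨yg, hygC, hygne, hygval⟩ := hmemInf x1 hx1C
  obtain ⟨g, hgdef⟩ : ∃ g : ℕ, g = (x1 - yg).val := ⟨_, rfl⟩
  have hgmin : ∀ y ∈ C, y ≠ x1 → g ≤ (x1 - y).val := by
    intro y hy hyne
    rw [hgdef, hygval]
    exact Nat.sInf_le ⟨y, hy, hyne, rfl⟩
  have hgN : g < N := by rw [hgdef]; exact ZMod.val_lt _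
  have hgapmem : ∀ x ∈ C, ∃ y ∈ C, y ≠ x ∧ (x - y).val ≤ g := by
    intro x hx
    obtain ⟨y, hyC, hyne, hyval⟩ := hmemInf x hx
    refine ⟨y, hyC, hyne, ?_⟩
    rw [hyval, hgdef, hygval]
    simpa using hx1max x hx
  obtain ⟨p, hpdef⟩ : ∃ p : ZMod N → ℕ, p = fun y => (y - x1).val := ⟨_, rfl⟩
  have hpN : ∀ y, p y < N := by intro y; rw [hpdef]; exact ZMod.val_lt _
  have hp1 : p x1 = 0 := by rw [hpdef]; simp
  have cover : ∀ (u : ℕ) (y : ZMod N), u ≤ p y → (p y : ℝ) ≤ (u : ℝ) + T →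
      y ∈ circInterval N (x1 + (u : ZMod N)) L := by
    intro u y h1 h2
    rw [hpdef] at h1 h2
    exact mem_circInterval_of x1 y u L h1 (natb _ _ h1 h2)
  -- all points have p + g ≤ N
  have hA : ∀ y ∈ C, p y + g ≤ N := by
    intro y hy
    by_cases hyx : y = x1
    · rw [hyx, hp1]; omega
    · have h1 := hgmin y hy hyx
      have h2 : (x1 - y).val = if p y ≤ p x1 then p x1 - p y else N - (p y - p x1) := by
        have e : x1 - y = ((p x1 : ℕ) : ZMod N) - ((p y : ℕ) : ZMod N) := by
          simp only [hpdef]; rw [castValRound, castValRound]; ring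
        rw [e, sub_val_eq' (hpN y) (hpN x1)]
      rw [hp1] at h2
      have hpy0 : p y ≠ 0 := by
        intro hc
        rw [hpdef] at hc
        have h3 : y - x1 = 0 := (ZMod.val_eq_zero _).mp hc
        exact hyx (by rwa [sub_eq_zero] at h3)
      rw [if_neg (fun hle => hpy0 (Nat.le_zero.mp hle))] at h2
      have h4 := hpN y
      omega
  -- a minimal point above a threshold is within g of the threshold
  have step : ∀ (θ : ℝ), 0 ≤ θ → ∀ x ∈ C, θ < (p x : ℝ) →
      (∀ z ∈ C, θ < (p z : ℝ) → p x ≤ p z) → (p x : ℝ) ≤ θ + g := by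
    intro θ hθ x hxC hθx hmin
    obtain ⟨y, hyC, hyne, hvg⟩ := hgapmem x hxC
    have h2 : (x - y).val = if p y ≤ p x then p x - p y else N - (p y - p x) := by
      have e : x - y = ((p x : ℕ) : ZMod N) - ((p y : ℕ) : ZMod N) := by
        simp only [hpdef]; rw [castValRound, castValRound]; ring
      rw [e, sub_val_eq' (hpN y) (hpN x)]
    have hvne : (x - y).val ≠ 0 := by
      intro hc
      have h3 : x - y = 0 := (ZMod.val_eq_zero _).mp hc
      exact hyne (by rw [sub_eq_zero] at h3; exact h3.symm)
    by_cases hc : p y ≤ p x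
    · rw [if_pos hc] at h2
      by_cases hyθ : θ < (p y : ℝ)
      · have h3 := hmin y hyC hyθ
        have h4 : p y = p x := le_antisymm hc h3
        rw [h4] at h2; omega
      · push_neg at hyθ
        have h4 : p x ≤ p y + g := by omega
        have h5 : (p x : ℝ) ≤ (p y : ℝ) + (g : ℝ) := by exact_mod_cast h4
        linarith
    · rw [if_neg hc] at h2
      push_neg at hc
      have h5 := hA y hyC
      have h6 : p x = 0 := by omega
      rw [h6] at hθx
      simp at hθx
      linarith
  -- greedy construction
  set S1 := C.filter (fun y => T < (p y : ℝ)) with hS1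
  rcases Finset.eq_empty_or_nonempty S1 with h1e | h1ne
  · refine ⟨x1 + ((0:ℕ) : ZMod N), x1 + ((0:ℕ) : ZMod N), x1 + ((0:ℕ) : ZMod N),
      L, L, L, hL, hL, hL, ?_⟩
    intro y hy
    simp only [Finset.mem_coe] at hy
    have hyb : ¬ T < (p y : ℝ) := by
      intro hc
      have : y ∈ S1 := Finset.mem_filter.mpr ⟨hy, hc⟩
      rw [h1e] at this; simp at this
    push_neg at hyb
    exact Or.inl (Or.inl (cover 0 y (by omega) (by push_cast; linarith)))
  obtain ⟨x2, hx2S, hx2min⟩ := S1.exists_min_image p h1ne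
  have hx2C : x2 ∈ C := (Finset.mem_filter.mp hx2S).1
  have hp2 : T < (p x2 : ℝ) := (Finset.mem_filter.mp hx2S).2
  have hx2min' : ∀ z ∈ C, T < (p z : ℝ) → p x2 ≤ p z := fun z hz hTz =>
    hx2min z (Finset.mem_filter.mpr ⟨hz, hTz⟩)
  set S2 := C.filter (fun y => (p x2 : ℝ) + T < (p y : ℝ)) with hS2
  rcases Finset.eq_empty_or_nonempty S2 with h2e | h2ne
  · refine ⟨x1 + ((0:ℕ) : ZMod N), x1 + ((p x2 : ℕ) : ZMod N), x1 + ((p x2 : ℕ) : ZMod N),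
      L, L, L, hL, hL, hL, ?_⟩
    intro y hy
    simp only [Finset.mem_coe] at hy
    by_cases hyT : T < (p y : ℝ)
    · have hge : p x2 ≤ p y := hx2min' y hy hyT
      have hle : (p y : ℝ) ≤ (p x2 : ℝ) + T := by
        by_contra hcc; push_neg at hcc
        have : y ∈ S2 := Finset.mem_filter.mpr ⟨hy, hcc⟩
        rw [h2e] at this; simp at this
      exact Or.inr (cover (p x2) y hge (by linarith))
    · push_neg at hyT
      exact Or.inl (Or.inl (cover 0 y (by omega) (by push_cast; linarith)))
  obtain ⟨x3, hx3S, hx3min⟩ := S2.exists_min_image p h2ne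
  have hx3C : x3 ∈ C := (Finset.mem_filter.mp hx3S).1
  have hp3 : (p x2 : ℝ) + T < (p x3 : ℝ) := (Finset.mem_filter.mp hx3S).2
  have hx3min' : ∀ z ∈ C, (p x2 : ℝ) + T < (p z : ℝ) → p x3 ≤ p z := fun z hz hTz =>
    hx3min z (Finset.mem_filter.mpr ⟨hz, hTz⟩)
  set S3 := C.filter (fun y => (p x3 : ℝ) + T < (p y : ℝ)) with hS3
  rcases Finset.eq_empty_or_nonempty S3 with h3e | h3ne
  · refine ⟨x1 + ((0:ℕ) : ZMod N), x1 + ((p x2 : ℕ) : ZMod N), x1 + ((p x3 : ℕ) : ZMod N),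
      L, L, L, hL, hL, hL, ?_⟩
    intro y hy
    simp only [Finset.mem_coe] at hy
    by_cases hyT : T < (p y : ℝ)
    · by_cases hyT2 : (p x2 : ℝ) + T < (p y : ℝ)
      · have hge : p x3 ≤ p y := hx3min' y hy hyT2
        have hle : (p y : ℝ) ≤ (p x3 : ℝ) + T := by
          by_contra hcc; push_neg at hcc
          have : y ∈ S3 := Finset.mem_filter.mpr ⟨hy, hcc⟩
          rw [h3e] at this; simp at this
        exact Or.inr (cover (p x3) y hge (by linarith))
      · push_neg at hyT2
        have hge : p x2 ≤ p y := hx2min' y hy hyT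
        exact Or.inl (Or.inr (cover (p x2) y hge (by linarith)))
    · push_neg at hyT
      exact Or.inl (Or.inl (cover 0 y (by omega) (by push_cast; linarith)))
  -- x4 exists : contradiction with ¬ SpreadOut
  exfalso
  obtain ⟨x4, hx4S, hx4min⟩ := S3.exists_min_image p h3ne
  have hx4C : x4 ∈ C := (Finset.mem_filter.mp hx4S).1
  have hp4 : (p x3 : ℝ) + T < (p x4 : ℝ) := (Finset.mem_filter.mp hx4S).2
  have hx4min' : ∀ z ∈ C, (p x3 : ℝ) + T < (p z : ℝ) → p x4 ≤ p z := fun z hz hTz =>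
    hx4min z (Finset.mem_filter.mpr ⟨hz, hTz⟩)
  -- upper bound on p x4
  have hub : (p x4 : ℝ) ≤ (N : ℝ) - T := by
    rcases le_or_gt T (g : ℝ) with hg | hg
    · have h' : (p x4 : ℝ) + (g : ℝ) ≤ (N : ℝ) := by exact_mod_cast hA x4 hx4C
      linarith
    · have b2 : (p x2 : ℝ) ≤ T + g := step T hT0.le x2 hx2C hp2 hx2min'
      have b3 : (p x3 : ℝ) ≤ ((p x2 : ℝ) + T) + g :=
        step _ (by positivity) x3 hx3C hp3 hx3min'
      have b4 : (p x4 : ℝ) ≤ ((p x3 : ℝ) + T) + g :=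
        step _ (by positivity) x4 hx4C hp4 hx4min'
      linarith
  -- chain of strict inequalities in ℕ
  have n12 : p x1 < p x2 := by
    rw [hp1]
    have : (0 : ℝ) < (p x2 : ℝ) := lt_trans hT0 hp2
    exact_mod_cast this
  have n23 : p x2 < p x3 := by
    have : (p x2 : ℝ) < (p x3 : ℝ) := by linarith
    exact_mod_cast this
  have n34 : p x3 < p x4 := by
    have : (p x3 : ℝ) < (p x4 : ℝ) := by linarith
    exact_mod_cast this
  have nn2 : (0 : ℝ) ≤ (p x2 : ℝ) := Nat.cast_nonneg _
  have nn3 : (0 : ℝ) ≤ (p x3 : ℝ) := Nat.cast_nonneg _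
  have hp1R : ((x1 - x1).val : ℝ) = 0 := by
    have := hp1; simp only [hpdef] at this; rw [this]; simp
  simp only [hpdef] at n12 n23 n34 hp2 hp3 hp4 hub nn2 nn3
  apply hnot
  refine ⟨x1, hx1C, x2, hx2C, x3, hx3C, x4, hx4C,
    circDist_lower x1 x1 x2 (by omega) T (by linarith) (by linarith),
    circDist_lower x1 x1 x3 (by omega) T (by linarith) (by linarith),
    circDist_lower x1 x1 x4 (by omega) T (by linarith) (by linarith),
    circDist_lower x1 x2 x3 (by omega) T (by linarith) (by linarith),
    circDist_lower x1 x2 x4 (by omega) T (by linarith) (by linarith),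
    circDist_lower x1 x3 x4 (by omega) T (by linarith) (by linarith)⟩
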